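/- Let S and S' be antichain covers of Fin p such that S' is a parent of S. Then {s : Fin p → Bool | f_S s = true} is a strict subset of {s : Fin p → Bool | f_{S'} s = true}, and the cardinality of {s : Fin p → Bool | f_{S'} s = true ∧ f_S s = false} is equal to 1 or 2. -/

import Mathlib

/-- The Boolean function associated with a family `S` of subsets of `Fin p`. -/
def fS {p : ℕ} (S : Finset (Finset (Fin p))) (s : Fin p → Bool) : Bool :=
  decide (∃ σ ∈ S, ∀ k ∈ σ, s k = true)

/-- `X` covers `Fin p`. -/
def Covers {p : ℕ} (X : Finset (Finset (Fin p))) : Prop :=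
  ∀ i : Fin p, ∃ σ ∈ X, i ∈ σ

/-- `S` is an antichain cover of `Fin p`. -/
def AntichainCover {p : ℕ} (S : Finset (Finset (Fin p))) : Prop :=
  IsAntichain (· ⊆ ·) (S : Set (Finset (Fin p))) ∧ Covers S

/-- `S ⪯ S'` : for every `σ ∈ S` there exists `σ' ∈ S'` with `σ' ⊆ σ`. -/
def Preceq {p : ℕ} (S S' : Finset (Finset (Fin p))) : Prop :=
  ∀ σ ∈ S, ∃ σ' ∈ S', σ' ⊆ σ

/-- `S'` is a parent of `S` in the poset of antichain covers of `Fin p` ordered by `⪯`. -/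
def Parent {p : ℕ} (S S' : Finset (Finset (Fin p))) : Prop :=
  Preceq S S' ∧ S ≠ S' ∧
    ¬ ∃ S'' : Finset (Finset (Fin p)),
        AntichainCover S'' ∧ S'' ≠ S ∧ S'' ≠ S' ∧ Preceq S S'' ∧ Preceq S'' S'

open Finset

namespace ParentAux

variable {p : ℕ}

/-- The up-closure (as a finset of finsets) generated by `S`. -/
def Up (S : Finset (Finset (Fin p))) : Finset (Finset (Fin p)) :=
  univ.filter fun A => ∃ σ ∈ S, σ ⊆ A

lemma mem_Up {S : Finset (Finset (Fin p))} {A : Finset (Fin p)} :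
    A ∈ Up S ↔ ∃ σ ∈ S, σ ⊆ A := by
  simp [Up]

def IsUpset (V : Finset (Finset (Fin p))) : Prop :=
  ∀ A ∈ V, ∀ B : Finset (Fin p), A ⊆ B → B ∈ V

lemma isUpset_Up (S : Finset (Finset (Fin p))) : IsUpset (Up S) := by
  intro A hA B hAB
  obtain ⟨σ, hσ, hsub⟩ := mem_Up.mp hA
  exact mem_Up.mpr ⟨σ, hσ, hsub.trans hAB⟩

lemma self_mem_Up {S : Finset (Finset (Fin p))} {σ : Finset (Fin p)} (h : σ ∈ S) :
    σ ∈ Up S := mem_Up.mpr ⟨σ, h, Subset.rfl⟩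

lemma fS_true_iff {S : Finset (Finset (Fin p))} {s : Fin p → Bool} :
    fS S s = true ↔ ∃ σ ∈ S, ∀ k ∈ σ, s k = true := by
  simp [fS]

def supp (s : Fin p → Bool) : Finset (Fin p) := univ.filter fun i => s i = true

lemma mem_supp {s : Fin p → Bool} {i : Fin p} : i ∈ supp s ↔ s i = true := by
  simp [supp]

lemma fS_iff_supp {S : Finset (Finset (Fin p))} {s : Fin p → Bool} :
    fS S s = true ↔ supp s ∈ Up S := by
  rw [fS_true_iff, mem_Up]
  constructor
  · rintro ⟨σ, hσ, h⟩
    exact ⟨σ, hσ, fun k hk => mem_supp.mpr (h k hk)⟩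
  · rintro ⟨σ, hσ, h⟩
    exact ⟨σ, hσ, fun k hk => mem_supp.mp (h hk)⟩

lemma supp_decide (A : Finset (Fin p)) : supp (fun i => decide (i ∈ A)) = A := by
  ext i; simp [mem_supp]

lemma Up_subset_of_preceq {S S' : Finset (Finset (Fin p))} (h : Preceq S S') :
    Up S ⊆ Up S' := by
  intro A hA
  obtain ⟨σ, hσ, hsub⟩ := mem_Up.mp hA
  obtain ⟨σ', hσ', hsub'⟩ := h σ hσ
  exact mem_Up.mpr ⟨σ', hσ', hsub'.trans hsub⟩

/-- Antichains are determined by their up-closures. -/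
lemma antichain_eq_of_Up_eq {S S' : Finset (Finset (Fin p))}
    (hS : IsAntichain (· ⊆ ·) (S : Set (Finset (Fin p))))
    (hS' : IsAntichain (· ⊆ ·) (S' : Set (Finset (Fin p))))
    (h : Up S = Up S') : S = S' := by
  have key : ∀ T T' : Finset (Finset (Fin p)),
      IsAntichain (· ⊆ ·) (T : Set (Finset (Fin p))) → Up T = Up T' → T ⊆ T' := by
    intro T T' hT hTT' σ hσ
    have h1 : σ ∈ Up T' := hTT' ▸ self_mem_Up hσ
    obtain ⟨σ', hσ', hsub'⟩ := mem_Up.mp h1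
    have h2 : σ' ∈ Up T := hTT' ▸ self_mem_Up hσ'
    obtain ⟨σ'', hσ'', hsub''⟩ := mem_Up.mp h2
    have hsub3 : σ'' ⊆ σ := hsub''.trans hsub'
    have h3 : σ'' = σ := by
      by_contra hne
      exact hT hσ'' hσ hne hsub3
    have h4 : σ' = σ := Subset.antisymm hsub' (h3 ▸ hsub'')
    rwa [h4] at hσ'
  exact Subset.antisymm (key S S' hS h) (key S' S hS' h.symm)

/-- every member of a family contains a minimal member. -/
lemma exists_min (V : Finset (Finset (Fin p))) :
    ∀ A ∈ V, ∃ B ∈ V, B ⊆ A ∧ ∀ C ∈ V, C ⊆ B → C = B := by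
  intro A
  induction A using Finset.strongInductionOn with
  | _ A ih =>
    intro hA
    by_cases h : ∀ C ∈ V, C ⊆ A → C = A
    · exact ⟨A, hA, Subset.rfl, h⟩
    · push_neg at h
      obtain ⟨C, hC, hCA, hne⟩ := h
      obtain ⟨B, hB, hBC, hmin⟩ := ih C (ssubset_of_subset_of_ne hCA hne) hC
      exact ⟨B, hB, hBC.trans hCA, hmin⟩

/-- The minimal elements of a family. -/
def Smin (V : Finset (Finset (Fin p))) : Finset (Finset (Fin p)) :=
  V.filter fun A => ∀ C ∈ V, C ⊆ A → C = A

lemma Smin_antichain (V : Finset (Finset (Fin p))) :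
    IsAntichain (· ⊆ ·) (Smin V : Set (Finset (Fin p))) := by
  intro a ha b hb hne hab
  simp only [coe_filter, Set.mem_setOf_eq, Smin, mem_coe, mem_filter] at ha hb
  exact hne (hb.2 a ha.1 hab)

lemma Up_Smin {V : Finset (Finset (Fin p))} (hV : IsUpset V) : Up (Smin V) = V := by
  ext A
  rw [mem_Up]
  constructor
  · rintro ⟨σ, hσ, hsub⟩
    have : σ ∈ V := (mem_filter.mp hσ).1
    exact hV σ this A hsub
  · intro hA
    obtain ⟨B, hB, hBA, hmin⟩ := exists_min V A hA
    exact ⟨B, mem_filter.mpr ⟨hB, hmin⟩, hBA⟩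

/-- If an upset is insensitive to coordinate `i`, its cardinality is even. -/
lemma even_of_insensitive {V : Finset (Finset (Fin p))} (hup : IsUpset V) (i : Fin p)
    (h : ∀ C ∈ V, i ∈ C → C.erase i ∈ V) : Even V.card := by
  classical
  have hsplit : (V.filter (fun A => i ∈ A)).card + (V.filter (fun A => i ∉ A)).card = V.card :=
    Finset.card_filter_add_card_filter_not (fun A => i ∈ A)
  have hcard : (V.filter (fun A => i ∈ A)).card = (V.filter (fun A => i ∉ A)).card := by
    apply Finset.card_bij (fun A _ => A.erase i)
    · intro A hA
      rw [mem_filter] at hA ⊢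
      exact ⟨h A hA.1 hA.2, notMem_erase i A⟩
    · intro A₁ hA₁ A₂ hA₂ heq
      rw [mem_filter] at hA₁ hA₂
      have := congrArg (insert i) heq
      rwa [insert_erase hA₁.2, insert_erase hA₂.2] at this
    · intro B hB
      rw [mem_filter] at hB
      refine ⟨insert i B, mem_filter.mpr ⟨hup B hB.1 _ (subset_insert i B), mem_insert_self i B⟩,
        erase_insert hB.2⟩
  refine ⟨(V.filter (fun A => i ∈ A)).card, ?_⟩
  omega

lemma dep_of_odd {V : Finset (Finset (Fin p))} (hup : IsUpset V) (hodd : ¬ Even V.card)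
    (i : Fin p) : ∃ C ∈ V, i ∈ C ∧ C.erase i ∉ V := by
  by_contra h
  push_neg at h
  exact hodd (even_of_insensitive hup i h)

lemma Smin_covers {V : Finset (Finset (Fin p))} (hup : IsUpset V) (hodd : ¬ Even V.card) :
    Covers (Smin V) := by
  intro i
  obtain ⟨C, hC, hiC, hCe⟩ := dep_of_odd hup hodd i
  obtain ⟨B, hB, hBC, hmin⟩ := exists_min V C hC
  refine ⟨B, mem_filter.mpr ⟨hB, hmin⟩, ?_⟩
  by_contra hiB
  have hBe : B ⊆ C.erase i := subset_erase.mpr ⟨hBC, hiB⟩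
  exact hCe (hup B hB _ hBe)

end ParentAux

namespace ParentAux

/-- The equivalence between states and subsets, restricted to a difference. -/
def stateEquiv (S S' : Finset (Finset (Fin p))) :
    {s : Fin p → Bool // fS S' s = true ∧ fS S s = false} ≃
      {A : Finset (Fin p) // A ∈ Up S' \ Up S} where
  toFun s := ⟨supp s.1, by
    obtain ⟨h1, h2⟩ := s.2
    rw [mem_sdiff]
    refine ⟨fS_iff_supp.mp h1, ?_⟩
    intro hmem
    have := fS_iff_supp.mpr hmem
    rw [h2] at this
    exact Bool.false_ne_true this⟩
  invFun A := ⟨fun i => decide (i ∈ A.1), by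
    have hA := mem_sdiff.mp A.2
    constructor
    · rw [fS_iff_supp, supp_decide]; exact hA.1
    · have : ¬ fS S (fun i => decide (i ∈ A.1)) = true := by
        rw [fS_iff_supp, supp_decide]; exact hA.2
      exact Bool.not_eq_true _ |>.mp this⟩
  left_inv s := by
    apply Subtype.ext
    funext i
    simp only []
    by_cases h : s.1 i = true
    · simp [mem_supp, h]
    · simp only [Bool.not_eq_true] at h
      simp [mem_supp, h]
  right_inv A := by
    apply Subtype.ext
    exact supp_decide A.1

end ParentAux

open ParentAux Finset in
theorem parent_diff_aux (p : ℕ) (S S' : Finset (Finset (Fin p)))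
    (hS : AntichainCover S) (hS' : AntichainCover S') (hpar : Parent S S') :
    {s : Fin p → Bool | fS S s = true} ⊂ {s : Fin p → Bool | fS S' s = true} ∧
    (Nat.card {s : Fin p → Bool // fS S' s = true ∧ fS S s = false} = 1 ∨
     Nat.card {s : Fin p → Bool // fS S' s = true ∧ fS S s = false} = 2) := by
  classical
  obtain ⟨hpre, hne, hnoint⟩ := hpar
  set U : Finset (Finset (Fin p)) := Up S with hU
  set U' : Finset (Finset (Fin p)) := Up S' with hU'
  have hsub : U ⊆ U' := Up_subset_of_preceq hpre
  have hUne : U ≠ U' := fun h => hne (antichain_eq_of_Up_eq hS.1 hS'.1 h)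
  set D : Finset (Finset (Fin p)) := U' \ U with hD
  have hDne : D.Nonempty := by
    rw [hD, sdiff_nonempty]
    intro h
    exact hUne (Finset.Subset.antisymm hsub h)
  have hcardU' : D.card + U.card = U'.card := card_sdiff_add_card_eq_card hsub
  -- Nat.card of the state difference equals D.card
  have hcard : Nat.card {s : Fin p → Bool // fS S' s = true ∧ fS S s = false} = D.card := by
    rw [Nat.card_congr (stateEquiv S S'), Nat.card_eq_fintype_card]
    exact Fintype.card_coe _
  -- strict inclusion of true-state sets
  have hss : {s : Fin p → Bool | fS S s = true} ⊂ {s : Fin p → Bool | fS S' s = true} := by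
    constructor
    · intro s hs
      simp only [Set.mem_setOf_eq] at hs ⊢
      rw [fS_iff_supp] at hs ⊢
      exact hsub hs
    · intro h
      obtain ⟨A, hA⟩ := hDne
      rw [hD, mem_sdiff] at hA
      have h1 : (fun i => decide (i ∈ A)) ∈ {s : Fin p → Bool | fS S' s = true} := by
        simp only [Set.mem_setOf_eq]
        rw [fS_iff_supp, supp_decide]
        exact hA.1
      have h2 := h h1
      simp only [Set.mem_setOf_eq] at h2
      rw [fS_iff_supp, supp_decide] at h2
      exact hA.2 h2
  refine ⟨hss, ?_⟩
  rw [hcard]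
  -- it remains to show D.card = 1 ∨ D.card = 2
  by_contra hbig
  push_neg at hbig
  have hd3 : 3 ≤ D.card := by
    have := hDne.card_pos
    omega
  -- pick a maximal element A₁ of D, and a maximal element A₂ of D.erase A₁
  obtain ⟨A₁, hA₁, hmax₁⟩ := D.exists_maximal hDne
  have hD2ne : (D.erase A₁).Nonempty := by
    rw [← Finset.card_pos, card_erase_of_mem hA₁]
    omega
  obtain ⟨A₂, hA₂, hmax₂⟩ := (D.erase A₁).exists_maximal hD2ne
  have hA₂D : A₂ ∈ D := mem_of_mem_erase hA₂
  have hA₂ne : A₂ ≠ A₁ := ne_of_mem_erase hA₂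
  have hA₁U' : A₁ ∈ U' := (mem_sdiff.mp hA₁).1
  have hA₁U : A₁ ∉ U := (mem_sdiff.mp hA₁).2
  have hA₂U' : A₂ ∈ U' := (mem_sdiff.mp hA₂D).1
  have hA₂U : A₂ ∉ U := (mem_sdiff.mp hA₂D).2
  set V₁ : Finset (Finset (Fin p)) := insert A₁ U with hV₁
  set V₂ : Finset (Finset (Fin p)) := insert A₂ V₁ with hV₂
  have hupU' : IsUpset U' := isUpset_Up S'
  have hupU : IsUpset U := isUpset_Up S
  have hupV₁ : IsUpset V₁ := by
    intro X hX B hXB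
    rcases mem_insert.mp hX with rfl | hXU
    · have hBU' : B ∈ U' := hupU' X hA₁U' B hXB
      by_cases hBU : B ∈ U
      · exact mem_insert_of_mem hBU
      · have hBD : B ∈ D := mem_sdiff.mpr ⟨hBU', hBU⟩
        have hXB' : X = B := by
          by_contra hne'
          exact hne' (Subset.antisymm hXB (hmax₁ hBD hXB))
        rw [← hXB']; exact mem_insert_self _ _
    · exact mem_insert_of_mem (hupU X hXU B hXB)
  have hupV₂ : IsUpset V₂ := by
    intro X hX B hXB
    rcases mem_insert.mp hX with rfl | hXV₁
    · have hBU' : B ∈ U' := hupU' X hA₂U' B hXB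
      by_cases hBU : B ∈ U
      · exact mem_insert_of_mem (mem_insert_of_mem hBU)
      · have hBD : B ∈ D := mem_sdiff.mpr ⟨hBU', hBU⟩
        by_cases hBA₁ : B = A₁
        · rw [hBA₁]; exact mem_insert_of_mem (mem_insert_self _ _)
        · have hBDe : B ∈ D.erase A₁ := mem_erase.mpr ⟨hBA₁, hBD⟩
          have hXB' : X = B := by
            by_contra hne'
            exact hne' (Subset.antisymm hXB (hmax₂ hBDe hXB))
          rw [← hXB']; exact mem_insert_self _ _
    · exact mem_insert_of_mem (hupV₁ X hXV₁ B hXB)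
  have hcardV₁ : V₁.card = U.card + 1 := card_insert_of_notMem hA₁U
  have hA₂V₁ : A₂ ∉ V₁ := by
    rw [hV₁, mem_insert]
    push_neg
    exact ⟨hA₂ne, hA₂U⟩
  have hcardV₂ : V₂.card = U.card + 2 := by
    rw [hV₂, card_insert_of_notMem hA₂V₁, hcardV₁]
  have hV₁subU' : V₁ ⊆ U' := insert_subset hA₁U' hsub
  have hV₂subU' : V₂ ⊆ U' := insert_subset hA₂U' hV₁subU'
  have hUsubV₁ : U ⊆ V₁ := subset_insert _ _
  have hUsubV₂ : U ⊆ V₂ := hUsubV₁.trans (subset_insert _ _)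
  -- choose the odd one
  obtain ⟨V, hupV, hUV, hVU', hlt1, hlt2, hodd⟩ :
      ∃ V : Finset (Finset (Fin p)), IsUpset V ∧ U ⊆ V ∧ V ⊆ U' ∧
        U.card < V.card ∧ V.card < U'.card ∧ ¬ Even V.card := by
    have hU'big : U.card + 3 ≤ U'.card := by omega
    rcases Nat.even_or_odd U.card with he | ho
    · have hem : U.card % 2 = 0 := Nat.even_iff.mp he
      exact ⟨V₁, hupV₁, hUsubV₁, hV₁subU', by rw [hcardV₁]; omega, by rw [hcardV₁]; omega, by
        rw [hcardV₁, Nat.even_iff]; omega⟩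
    · have hom : U.card % 2 = 1 := Nat.odd_iff.mp ho
      exact ⟨V₂, hupV₂, hUsubV₂, hV₂subU', by rw [hcardV₂]; omega, by rw [hcardV₂]; omega, by
        rw [hcardV₂, Nat.even_iff]; omega⟩
  -- build the intermediate antichain cover
  set S'' : Finset (Finset (Fin p)) := Smin V with hS''
  have hUpS'' : Up S'' = V := Up_Smin hupV
  apply hnoint
  refine ⟨S'', ⟨Smin_antichain V, Smin_covers hupV hodd⟩, ?_, ?_, ?_, ?_⟩
  · intro h
    have hVU : V = U := by rw [← hUpS'', h]
    rw [hVU] at hlt1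
    exact lt_irrefl _ hlt1
  · intro h
    have hVU : V = U' := by rw [← hUpS'', h]
    rw [hVU] at hlt2
    exact lt_irrefl _ hlt2
  · -- Preceq S S''
    intro σ hσ
    have hσV : σ ∈ V := hUV (self_mem_Up hσ)
    obtain ⟨B, hB, hBσ, hmin⟩ := exists_min V σ hσV
    exact ⟨B, Finset.mem_filter.mpr ⟨hB, hmin⟩, hBσ⟩
  · -- Preceq S'' S'
    intro σ hσ
    have hσV : σ ∈ V := Finset.mem_of_mem_filter _ hσ
    have hσU' : σ ∈ U' := hVU' hσV
    obtain ⟨σ', hσ', hsub'⟩ := mem_Up.mp hσU'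
    exact ⟨σ', hσ', hsub'⟩

theorem parent_trueStates_diff_card_one_or_two (p : ℕ) (S S' : Finset (Finset (Fin p)))
    (hS : AntichainCover S) (hS' : AntichainCover S') (hpar : Parent S S') :
    {s : Fin p → Bool | fS S s = true} ⊂ {s : Fin p → Bool | fS S' s = true} ∧
    (Nat.card {s : Fin p → Bool // fS S' s = true ∧ fS S s = false} = 1 ∨
     Nat.card {s : Fin p → Bool // fS S' s = true ∧ fS S s = false} = 2) :=
  parent_diff_aux p S S' hS hS' hpar
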